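/- arXiv:1401.6504 — 2 statements merged into one kernel-verified Lean document; each statement's English description precedes it below -/
import Mathlib

section
/- Let a ∈ ℝ^{q₂} and b ∈ ℝ^{q₁} maximize aᵀ S_{YX} b subject to aᵀ S_{YY} a = 1 and bᵀ S_{XX} b = 1, where S_{YY} and S_{XX} are positive definite. Then the optimal value aᵀ S_{YX} b equals the largest singular value of S_{YY}^{-1/2} S_{YX} S_{XX}^{-1/2}. -/
open Matrix
open scoped RealInnerProductSpace

/-- The square root of a positive semidefinite matrix (as in Mathlib of December 2024). -/
noncomputable def Matrix.PosSemidef.sqrt {n 𝕜 : Type*} [Fintype n] [RCLike 𝕜] [PartialOrder 𝕜] [DecidableEq n]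
    {A : Matrix n n 𝕜} (hA : A.PosSemidef) : Matrix n n 𝕜 :=
  hA.1.eigenvectorUnitary.1 * diagonal ((↑) ∘ Real.sqrt ∘ hA.1.eigenvalues) *
  (star hA.1.eigenvectorUnitary : Matrix n n 𝕜)

lemma Matrix.PosSemidef.sqrt_mul_self {n : ℕ} {A : Matrix (Fin n) (Fin n) ℝ} (hA : A.PosSemidef) :
    hA.sqrt * hA.sqrt = A := by
  conv_rhs => rw [hA.1.spectral_theorem, Unitary.conjStarAlgAut_apply]
  have hU : (star hA.1.eigenvectorUnitary : Matrix (Fin n) (Fin n) ℝ) * hA.1.eigenvectorUnitary.1 = 1 :=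
    Matrix.UnitaryGroup.star_mul_self _
  simp only [Matrix.PosSemidef.sqrt]
  rw [show ∀ P D Q : Matrix (Fin n) (Fin n) ℝ, P * D * Q * (P * D * Q) = P * D * (Q * P) * D * Q from
    fun P D Q => by simp only [Matrix.mul_assoc]]
  rw [hU, Matrix.mul_one, Matrix.mul_assoc _ (diagonal _) (diagonal _), diagonal_mul_diagonal]
  congr 3
  funext i
  simp [Real.mul_self_sqrt (hA.eigenvalues_nonneg i)]

lemma Matrix.PosSemidef.isHermitian_sqrt {n : ℕ} {A : Matrix (Fin n) (Fin n) ℝ} (hA : A.PosSemidef) :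
    hA.sqrt.IsHermitian := by
  simp only [Matrix.PosSemidef.sqrt, IsHermitian, conjTranspose_mul, diagonal_conjTranspose,
    Matrix.mul_assoc]
  simp [Matrix.mul_assoc, Matrix.star_eq_conjTranspose, conjTranspose_eq_transpose_of_trivial]

section aux
variable {n : ℕ} {S : Matrix (Fin n) (Fin n) ℝ}

lemma cca_sqrt_det_isUnit (hS : S.PosDef) : IsUnit hS.posSemidef.sqrt.det := by
  have h := hS.posSemidef.sqrt_mul_self
  have h2 : hS.posSemidef.sqrt.det * hS.posSemidef.sqrt.det = S.det := by
    rw [← det_mul, h]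
  have hd := hS.det_pos
  rw [isUnit_iff_ne_zero]
  intro h0; rw [h0, mul_zero] at h2; linarith

lemma cca_sqrt_transpose (hS : S.PosDef) :
    hS.posSemidef.sqrtᵀ = hS.posSemidef.sqrt := by
  simpa [IsSymm] using hS.posSemidef.isHermitian_sqrt

lemma cca_sqrt_mulVec_inv (hS : S.PosDef) (u : Fin n → ℝ) :
    hS.posSemidef.sqrt *ᵥ (hS.posSemidef.sqrt⁻¹ *ᵥ u) = u := by
  rw [mulVec_mulVec, mul_nonsing_inv _ (cca_sqrt_det_isUnit hS), one_mulVec]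

lemma cca_inv_mulVec_sqrt (hS : S.PosDef) (x : Fin n → ℝ) :
    hS.posSemidef.sqrt⁻¹ *ᵥ (hS.posSemidef.sqrt *ᵥ x) = x := by
  rw [mulVec_mulVec, nonsing_inv_mul _ (cca_sqrt_det_isUnit hS), one_mulVec]

lemma cca_quad_eq (hS : S.PosDef) (x : Fin n → ℝ) :
    x ⬝ᵥ S *ᵥ x
      = (hS.posSemidef.sqrt *ᵥ x) ⬝ᵥ (hS.posSemidef.sqrt *ᵥ x) := by
  set R := hS.posSemidef.sqrt with hR
  conv_lhs => rw [← hS.posSemidef.sqrt_mul_self, ← hR, ← mulVec_mulVec,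
    dotProduct_mulVec]
  congr 1
  rw [← mulVec_transpose, cca_sqrt_transpose hS]

end aux

section aux2
variable {q₁ q₂ : ℕ}

lemma cca_dot_eq (SYX : Matrix (Fin q₂) (Fin q₁) ℝ)
    {SYY : Matrix (Fin q₂) (Fin q₂) ℝ} {SXX : Matrix (Fin q₁) (Fin q₁) ℝ}
    (hYY : SYY.PosDef) (hXX : SXX.PosDef) (a' : Fin q₂ → ℝ) (b' : Fin q₁ → ℝ) :
    a' ⬝ᵥ SYX *ᵥ b'
      = (hYY.posSemidef.sqrt *ᵥ a') ⬝ᵥ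
        (((hYY.posSemidef.sqrt)⁻¹ * SYX * (hXX.posSemidef.sqrt)⁻¹) *ᵥ
          (hXX.posSemidef.sqrt *ᵥ b')) := by
  set R := hYY.posSemidef.sqrt with hR
  set Q := hXX.posSemidef.sqrt with hQ
  rw [mulVec_mulVec, Matrix.mul_assoc (R⁻¹ * SYX) Q⁻¹ Q, nonsing_inv_mul _ (cca_sqrt_det_isUnit hXX),
    Matrix.mul_one, ← mulVec_mulVec, dotProduct_mulVec (R *ᵥ a'), ← mulVec_transpose,
    transpose_nonsing_inv, cca_sqrt_transpose hYY, cca_inv_mulVec_sqrt hYY]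

end aux2

/-- If `a, b` maximize `aᵀ S_YX b` subject to `aᵀ S_YY a = 1`, `bᵀ S_XX b = 1`
with `S_YY`, `S_XX` positive definite, then the optimal value equals the largest
singular value (operator norm) of `S_YY^{-1/2} S_YX S_XX^{-1/2}`. -/
theorem cca_value_eq_largest_singular_value
    {q₁ q₂ : ℕ}
    (SYX : Matrix (Fin q₂) (Fin q₁) ℝ)
    (SYY : Matrix (Fin q₂) (Fin q₂) ℝ) (SXX : Matrix (Fin q₁) (Fin q₁) ℝ)
    (hYY : SYY.PosDef) (hXX : SXX.PosDef)
    (a : Fin q₂ → ℝ) (b : Fin q₁ → ℝ)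
    (hmax : IsGreatest {x : ℝ | ∃ (a' : Fin q₂ → ℝ) (b' : Fin q₁ → ℝ),
        a' ⬝ᵥ SYY *ᵥ a' = 1 ∧ b' ⬝ᵥ SXX *ᵥ b' = 1 ∧ x = a' ⬝ᵥ SYX *ᵥ b'}
        (a ⬝ᵥ SYX *ᵥ b)) :
    a ⬝ᵥ SYX *ᵥ b =
      ‖(Matrix.toEuclideanLin
          ((hYY.posSemidef.sqrt)⁻¹ * SYX * (hXX.posSemidef.sqrt)⁻¹)).toContinuousLinearMap‖ := by
  set R := hYY.posSemidef.sqrt with hRdef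
  set Q := hXX.posSemidef.sqrt with hQdef
  set M := R⁻¹ * SYX * Q⁻¹ with hMdef
  set T := (Matrix.toEuclideanLin M).toContinuousLinearMap with hTdef
  set val := a ⬝ᵥ SYX *ᵥ b with hvaldef
  -- T as mulVec
  have hT : ∀ v : EuclideanSpace ℝ (Fin q₁),
      T v = (WithLp.equiv 2 (Fin q₂ → ℝ)).symm (M *ᵥ (WithLp.equiv 2 (Fin q₁ → ℝ) v)) := by
    intro v
    simp [hTdef, Matrix.toEuclideanLin_apply]
  -- inner products on EuclideanSpace are dot products
  have hinner : ∀ (x y : EuclideanSpace ℝ (Fin q₂)),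
      ⟪x, y⟫ = (WithLp.equiv 2 _ x) ⬝ᵥ (WithLp.equiv 2 _ y) := by
    intro x y
    simp [PiLp.inner_apply, dotProduct, mul_comm]
  have hnorm : ∀ {k : ℕ} (x : EuclideanSpace ℝ (Fin k)),
      ‖x‖ = 1 ↔ (WithLp.equiv 2 _ x) ⬝ᵥ (WithLp.equiv 2 _ x) = 1 := by
    intro k x
    have h1 : (WithLp.equiv 2 _ x) ⬝ᵥ (WithLp.equiv 2 _ x) = ⟪x, x⟫ := by
      rw [PiLp.inner_apply]; simp [dotProduct, sq]
    rw [h1, real_inner_self_eq_norm_sq]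
    constructor
    · intro h; rw [h]; norm_num
    · intro h
      have := norm_nonneg x
      nlinarith
  -- key: for any unit vectors u v, ⟪u, T v⟫ ≤ val
  have key : ∀ (u : EuclideanSpace ℝ (Fin q₂)) (v : EuclideanSpace ℝ (Fin q₁)),
      ‖u‖ = 1 → ‖v‖ = 1 → ⟪u, T v⟫ ≤ val := by
    intro u v hu hv
    set u' := WithLp.equiv 2 (Fin q₂ → ℝ) u
    set v' := WithLp.equiv 2 (Fin q₁ → ℝ) v
    apply hmax.2
    refine ⟨R⁻¹ *ᵥ u', Q⁻¹ *ᵥ v', ?_, ?_, ?_⟩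
    · rw [cca_quad_eq hYY, ← hRdef, cca_sqrt_mulVec_inv hYY]
      exact (hnorm u).mp hu
    · rw [cca_quad_eq hXX, ← hQdef, cca_sqrt_mulVec_inv hXX]
      exact (hnorm v).mp hv
    · rw [cca_dot_eq SYX hYY hXX, ← hRdef, ← hQdef, cca_sqrt_mulVec_inv hYY,
        cca_sqrt_mulVec_inv hXX, hinner, hT]
      simp [← hMdef]
      rfl
  -- existence of unit vectors from hmax.1
  obtain ⟨a₀, b₀, ha₀, hb₀, hval₀⟩ := hmax.1
  have hu₀ : ‖(WithLp.equiv 2 (Fin q₂ → ℝ)).symm (R *ᵥ a₀)‖ = 1 := by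
    rw [hnorm]
    rw [show WithLp.equiv 2 (Fin q₂ → ℝ) ((WithLp.equiv 2 (Fin q₂ → ℝ)).symm (R *ᵥ a₀)) = R *ᵥ a₀ from rfl]
    rw [← cca_quad_eq hYY]
    exact ha₀
  have hv₀ : ‖(WithLp.equiv 2 (Fin q₁ → ℝ)).symm (Q *ᵥ b₀)‖ = 1 := by
    rw [hnorm]
    rw [show WithLp.equiv 2 (Fin q₁ → ℝ) ((WithLp.equiv 2 (Fin q₁ → ℝ)).symm (Q *ᵥ b₀)) = Q *ᵥ b₀ from rfl]
    rw [← cca_quad_eq hXX]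
    exact hb₀
  set u₀ : EuclideanSpace ℝ (Fin q₂) := (WithLp.equiv 2 (Fin q₂ → ℝ)).symm (R *ᵥ a₀)
  set v₀ : EuclideanSpace ℝ (Fin q₁) := (WithLp.equiv 2 (Fin q₁ → ℝ)).symm (Q *ᵥ b₀)
  -- val ≥ 0
  have hval0 : 0 ≤ val := by
    have h1 := key u₀ v₀ hu₀ hv₀
    have h2 := key (-u₀) v₀ (by rw [norm_neg]; exact hu₀) hv₀
    rw [inner_neg_left] at h2
    linarith
  apply le_antisymm
  · -- val ≤ ‖T‖
    have hvt : val = ⟪u₀, T v₀⟫ := by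
      rw [hinner, hT]
      rw [show WithLp.equiv 2 (Fin q₂ → ℝ) u₀ = R *ᵥ a₀ from rfl]
      rw [show (WithLp.equiv 2 (Fin q₂ → ℝ))
        ((WithLp.equiv 2 (Fin q₂ → ℝ)).symm (M *ᵥ (WithLp.equiv 2 (Fin q₁ → ℝ) v₀))) =
        M *ᵥ (WithLp.equiv 2 (Fin q₁ → ℝ) v₀) from rfl]
      rw [show WithLp.equiv 2 (Fin q₁ → ℝ) v₀ = Q *ᵥ b₀ from rfl]
      rw [hval₀, cca_dot_eq SYX hYY hXX, ← hRdef, ← hQdef, ← hMdef]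
    calc val = ⟪u₀, T v₀⟫ := hvt
      _ ≤ ‖u₀‖ * ‖T v₀‖ := real_inner_le_norm _ _
      _ ≤ ‖u₀‖ * (‖T‖ * ‖v₀‖) := by
          apply mul_le_mul_of_nonneg_left (T.le_opNorm v₀) (norm_nonneg _)
      _ = ‖T‖ := by rw [hu₀, hv₀]; ring
  · -- ‖T‖ ≤ val
    apply ContinuousLinearMap.opNorm_le_bound _ hval0
    intro x
    by_cases hx : x = 0
    · simp [hx]
    by_cases hTx : T x = 0
    · rw [hTx]; simp
      positivity
    have hnx : 0 < ‖x‖ := norm_pos_iff.mpr hx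
    have hnTx : 0 < ‖T x‖ := norm_pos_iff.mpr hTx
    have h := key (‖T x‖⁻¹ • T x) (‖x‖⁻¹ • x)
      (by rw [norm_smul, norm_inv, norm_norm, inv_mul_cancel₀ hnTx.ne'])
      (by rw [norm_smul, norm_inv, norm_norm, inv_mul_cancel₀ hnx.ne'])
    rw [_root_.map_smul, real_inner_smul_left, real_inner_smul_right,
      real_inner_self_eq_norm_sq] at h
    have h2 : ‖T x‖ / ‖x‖ ≤ val := by
      have : ‖T x‖⁻¹ * (‖x‖⁻¹ * ‖T x‖ ^ 2) = ‖T x‖ / ‖x‖ := by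
        field_simp
      rwa [this] at h
    rw [div_le_iff₀ hnx] at h2
    linarith
end

section
/- Let M₁ and M₂ be disjoint finite nonempty sets of points in a Euclidean space with sizes n₁, n₂ and centroids m₁, m₂. Then Ward's distance (n₁n₂/(n₁+n₂))‖m₁ - m₂‖² equals (1/(2(n₁+n₂))) Σ_{i,j ∈ M₁∪M₂} ‖g_i - g_j‖² - (1/(2n₁)) Σ_{i,j ∈ M₁} ‖g_i - g_j‖² - (1/(2n₂)) Σ_{i,j ∈ M₂} ‖g_i - g_j‖². -/
open Finset

private lemma pair_sum_sq {ι : Type*} {d : ℕ} (g : ι → EuclideanSpace ℝ (Fin d))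
    (M : Finset ι) :
    ∑ i ∈ M, ∑ j ∈ M, ‖g i - g j‖ ^ 2 =
      2 * (M.card : ℝ) * ∑ i ∈ M, ‖g i‖ ^ 2 - 2 * ‖∑ i ∈ M, g i‖ ^ 2 := by
  have h : ∀ i j : ι, ‖g i - g j‖ ^ 2 =
      ‖g i‖ ^ 2 + ‖g j‖ ^ 2 - 2 * inner ℝ (g i) (g j) := by
    intro i j
    have := norm_sub_sq_real (g i) (g j)
    linarith
  simp only [h, Finset.sum_sub_distrib, Finset.sum_add_distrib, Finset.sum_const,
    nsmul_eq_mul, ← Finset.mul_sum, ← Finset.sum_mul]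
  have hin : ∑ i ∈ M, ∑ j ∈ M, (inner ℝ (g i) (g j) : ℝ) = ‖∑ i ∈ M, g i‖ ^ 2 := by
    rw [← real_inner_self_eq_norm_sq, sum_inner]
    exact Finset.sum_congr rfl fun i _ => by rw [inner_sum]
  rw [hin]
  ring

/-- Ward's distance identity: for disjoint nonempty finite clusters `M₁`, `M₂`
of points in Euclidean space, with sizes `n₁`, `n₂` and centroids `m₁`, `m₂`,
`(n₁n₂/(n₁+n₂)) ‖m₁ - m₂‖²` equals the pairwise squared-distance expression. -/
theorem ward_distance_eq_pairwise_sums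
    {ι : Type*} [DecidableEq ι] {d : ℕ} (g : ι → EuclideanSpace ℝ (Fin d))
    (M₁ M₂ : Finset ι) (hdisj : Disjoint M₁ M₂)
    (h₁ : M₁.Nonempty) (h₂ : M₂.Nonempty)
    (n₁ n₂ : ℕ) (hn₁ : n₁ = M₁.card) (hn₂ : n₂ = M₂.card)
    (m₁ m₂ : EuclideanSpace ℝ (Fin d))
    (hm₁ : m₁ = ((n₁ : ℝ)⁻¹) • ∑ i ∈ M₁, g i)
    (hm₂ : m₂ = ((n₂ : ℝ)⁻¹) • ∑ i ∈ M₂, g i) :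
    ((n₁ : ℝ) * n₂ / (n₁ + n₂)) * ‖m₁ - m₂‖ ^ 2 =
      (1 / (2 * ((n₁ : ℝ) + n₂))) *
          ∑ i ∈ M₁ ∪ M₂, ∑ j ∈ M₁ ∪ M₂, ‖g i - g j‖ ^ 2
        - (1 / (2 * (n₁ : ℝ))) * ∑ i ∈ M₁, ∑ j ∈ M₁, ‖g i - g j‖ ^ 2
        - (1 / (2 * (n₂ : ℝ))) * ∑ i ∈ M₂, ∑ j ∈ M₂, ‖g i - g j‖ ^ 2 := by
  have hn1 : (0 : ℝ) < n₁ := by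
    rw [hn₁]; exact_mod_cast Finset.card_pos.mpr h₁
  have hn2 : (0 : ℝ) < n₂ := by
    rw [hn₂]; exact_mod_cast Finset.card_pos.mpr h₂
  set S₁ := ∑ i ∈ M₁, g i with hS₁
  set S₂ := ∑ i ∈ M₂, g i with hS₂
  set A₁ := ∑ i ∈ M₁, ‖g i‖ ^ 2 with hA₁
  set A₂ := ∑ i ∈ M₂, ‖g i‖ ^ 2 with hA₂
  have hcard : ((M₁ ∪ M₂).card : ℝ) = n₁ + n₂ := by
    rw [Finset.card_union_of_disjoint hdisj, hn₁, hn₂]; push_cast; ring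
  have hsumU : ∑ i ∈ M₁ ∪ M₂, g i = S₁ + S₂ := Finset.sum_union hdisj
  have hAU : ∑ i ∈ M₁ ∪ M₂, ‖g i‖ ^ 2 = A₁ + A₂ := Finset.sum_union hdisj
  rw [pair_sum_sq g M₁, pair_sum_sq g M₂, pair_sum_sq g (M₁ ∪ M₂),
    hcard, hsumU, hAU, ← hn₁, ← hn₂, ← hS₁, ← hS₂, ← hA₁, ← hA₂]
  have hnorm12 : ‖m₁ - m₂‖ ^ 2 =
      (n₁ : ℝ)⁻¹ ^ 2 * ‖S₁‖ ^ 2 - 2 * ((n₁ : ℝ)⁻¹ * (n₂ : ℝ)⁻¹ * inner ℝ S₁ S₂)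
        + (n₂ : ℝ)⁻¹ ^ 2 * ‖S₂‖ ^ 2 := by
    rw [hm₁, hm₂]
    have := norm_sub_sq_real ((n₁ : ℝ)⁻¹ • S₁) ((n₂ : ℝ)⁻¹ • S₂)
    rw [norm_smul, norm_smul, real_inner_smul_left, real_inner_smul_right] at this
    simp only [Real.norm_eq_abs, abs_of_pos (inv_pos.mpr hn1),
      abs_of_pos (inv_pos.mpr hn2)] at this
    rw [this]; ring
  have hnormU : ‖S₁ + S₂‖ ^ 2 = ‖S₁‖ ^ 2 + 2 * inner ℝ S₁ S₂ + ‖S₂‖ ^ 2 := by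
    have := norm_add_sq_real S₁ S₂
    linarith
  rw [hnorm12, hnormU]
  field_simp
  ring
end
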